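/- Let Q_j^{(i)} be a solution of the Hermite–Padé approximation problem and P_i^{(j)} a solution of the simultaneous Padé approximation problem for the same f_0, …, f_{L−1}, normalized so that each diagonal part Q_i^{(i)} is monic of degree n and each P_i^{(i)} is monic of degree n(L−1). Define the matrix R(z) := z^n·M_Q(z^{−1}). Then: (i) R(z) is a matrix of polynomials in z, and its inverse is R(z)^{−1} = z^{n(L−1)}·M_P(z^{−1}), which is also a matrix of polynomials in z; (ii) det R(z) = 1 identically, i.e. R(z) ∈ SL(L, ℂ[z]). -/

import Mathlib

noncomputable section

/-- `g = O(w^N)`: the coefficients of `w^0, …, w^{N-1}` in `g` vanish. -/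
def bigOh (g : PowerSeries ℂ) (N : ℕ) : Prop := ∀ k < N, PowerSeries.coeff k g = 0

/-- The entries of the row vector Q̃^{(i)} = (Q_0^{(i)}, …, Q_i^{(i)}, wQ_{i+1}^{(i)}, …, wQ_{L-1}^{(i)}). -/
def Qtil {L : ℕ} (Q : Fin L → Fin L → Polynomial ℂ) (i j : Fin L) : Polynomial ℂ :=
  if (j : ℕ) ≤ (i : ℕ) then Q i j else Polynomial.X * Q i j

/-- A solution of the Hermite–Padé approximation problem. -/
def IsHPSol {L : ℕ} (n : ℕ) (f : Fin L → PowerSeries ℂ)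
    (Q : Fin L → Fin L → Polynomial ℂ) : Prop :=
  (∀ i j, (Q i j).degree ≤ ((n - 1 + if i = j then 1 else 0 : ℕ) : WithBot ℕ)) ∧
  ∀ i, bigOh (∑ j, f j * ((Qtil Q i j : Polynomial ℂ) : PowerSeries ℂ)) (n * L)

/-- The entries of the column vector P̃^{(j)} = ᵀ(wP_0^{(j)}, …, wP_{j-1}^{(j)}, P_j^{(j)}, …, P_{L-1}^{(j)}). -/
def Ptil {L : ℕ} (P : Fin L → Fin L → Polynomial ℂ) (j i : Fin L) : Polynomial ℂ :=
  if (i : ℕ) < (j : ℕ) then Polynomial.X * P j i else P j i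

/-- A solution of the simultaneous Padé approximation problem.
Here `P j i` denotes the polynomial `P_i^{(j)}`. -/
def IsSPSol {L : ℕ} [NeZero L] (n : ℕ) (f : Fin L → PowerSeries ℂ)
    (P : Fin L → Fin L → Polynomial ℂ) : Prop :=
  (∀ j i, (P j i).degree ≤ ((n * (L - 1) - 1 + if i = j then 1 else 0 : ℕ) : WithBot ℕ)) ∧
  (∀ i : Fin L, 1 ≤ (i : ℕ) →
    bigOh (f 0 * ((P 0 i : Polynomial ℂ) : PowerSeries ℂ)
      - f i * ((P 0 0 : Polynomial ℂ) : PowerSeries ℂ)) (n * L)) ∧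
  (∀ j i : Fin L, 1 ≤ (j : ℕ) → 1 ≤ (i : ℕ) → (i : ℕ) < (j : ℕ) →
    bigOh (f 0 * ((P j i : Polynomial ℂ) : PowerSeries ℂ)
      - f i * ((P j 0 : Polynomial ℂ) : PowerSeries ℂ)) (n * L)) ∧
  (∀ j i : Fin L, 1 ≤ (j : ℕ) → (j : ℕ) ≤ (i : ℕ) →
    bigOh (f 0 * ((P j i : Polynomial ℂ) : PowerSeries ℂ)
      - f i * ((Polynomial.X * P j 0 : Polynomial ℂ) : PowerSeries ℂ)) (n * L))

namespace RinSLaux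

open Polynomial Matrix Finset

lemma coeff_mul_of_natDegree_le {p q : Polynomial ℂ} {a b : ℕ}
    (hp : p.natDegree ≤ a) (hq : q.natDegree ≤ b) :
    (p * q).coeff (a + b) = p.coeff a * q.coeff b := by
  rw [Polynomial.coeff_mul]
  rw [Finset.sum_eq_single ((a, b) : ℕ × ℕ)]
  · intro x hx hne
    have hsum : x.1 + x.2 = a + b := Finset.HasAntidiagonal.mem_antidiagonal.mp hx
    have h1 : x.1 ≠ a := by
      intro h; apply hne; ext
      · exact h
      · omega
    rcases lt_or_gt_of_ne h1 with h | h
    · have hx2 : b < x.2 := by omega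
      have : q.coeff x.2 = 0 := coeff_eq_zero_of_natDegree_lt (lt_of_le_of_lt hq hx2)
      simp [this]
    · have : p.coeff x.1 = 0 := coeff_eq_zero_of_natDegree_lt (lt_of_le_of_lt hp h)
      simp [this]
  · intro h; simp at h

lemma eq_C_mul_X_pow_of_mul_eq_X_pow :
    ∀ (N : ℕ) (d e : Polynomial ℂ), d * e = Polynomial.X ^ N →
      ∃ c : ℂ, c ≠ 0 ∧ d = Polynomial.C c * Polynomial.X ^ d.natDegree := by
  intro N
  induction N with
  | zero =>
    intro d e h
    rw [pow_zero] at h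
    obtain ⟨r, hr, hC⟩ := Polynomial.isUnit_iff.mp (IsUnit.of_mul_eq_one _ h)
    refine ⟨r, hr.ne_zero, ?_⟩
    rw [← hC, natDegree_C, pow_zero, mul_one]
  | succ N ih =>
    intro d e h
    by_cases h0 : d.coeff 0 = 0
    · obtain ⟨d₁, hd₁⟩ := Polynomial.X_dvd_iff.mpr h0
      have hcan : d₁ * e = Polynomial.X ^ N := by
        have hX : (Polynomial.X : Polynomial ℂ) ≠ 0 := Polynomial.X_ne_zero
        apply mul_left_cancel₀ hX
        rw [← mul_assoc, ← hd₁, h, pow_succ]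
        ring
      obtain ⟨c, hc, hce⟩ := ih d₁ e hcan
      refine ⟨c, hc, ?_⟩
      have hd : d = Polynomial.C c * Polynomial.X ^ (d₁.natDegree + 1) := by
        conv_lhs => rw [hd₁, hce]
        ring
      have hnd : d.natDegree = d₁.natDegree + 1 := by
        rw [hd, natDegree_C_mul_X_pow _ _ hc]
      rw [hnd]; exact hd
    · have he0 : e.coeff 0 = 0 := by
        have h00 : d.coeff 0 * e.coeff 0 = 0 := by
          rw [← Polynomial.mul_coeff_zero, h, Polynomial.coeff_X_pow]
          simp
        rcases mul_eq_zero.mp h00 with h' | h'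
        · exact absurd h' h0
        · exact h'
      obtain ⟨e₁, he₁⟩ := Polynomial.X_dvd_iff.mpr he0
      have hcan : d * e₁ = Polynomial.X ^ N := by
        have hX : (Polynomial.X : Polynomial ℂ) ≠ 0 := Polynomial.X_ne_zero
        apply mul_left_cancel₀ hX
        calc Polynomial.X * (d * e₁) = d * (Polynomial.X * e₁) := by ring
        _ = d * e := by rw [← he₁]
        _ = Polynomial.X ^ (N + 1) := h
        _ = Polynomial.X * Polynomial.X ^ N := by rw [pow_succ]; ring
      exact ih d e₁ hcan

lemma natDegree_det_le {L : ℕ} (M : Matrix (Fin L) (Fin L) (Polynomial ℂ)) {k : ℕ}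
    (h : ∀ i j, (M i j).natDegree ≤ k) : M.det.natDegree ≤ L * k := by
  rw [Matrix.det_apply']
  apply Polynomial.natDegree_sum_le_of_forall_le
  intro σ _
  refine le_trans (natDegree_mul_le) ?_
  have h1 : ((Equiv.Perm.sign σ : ℤ) : Polynomial ℂ).natDegree = 0 := natDegree_intCast _
  rw [h1, zero_add]
  refine le_trans (Polynomial.natDegree_prod_le _ _) ?_
  refine le_trans (Finset.sum_le_sum (fun i _ => h (σ i) i)) ?_
  rw [Finset.sum_const, Finset.card_univ, Fintype.card_fin, smul_eq_mul]

lemma adjugate_lower {L : ℕ} (A : Matrix (Fin L) (Fin L) ℂ)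
    (hA : ∀ i j : Fin L, i < j → A i j = 0) {i j : Fin L} (hij : i < j) :
    A.adjugate i j = 0 := by
  rw [Matrix.adjugate_apply]
  have htri : (A.updateRow j (Pi.single i 1)).BlockTriangular ⇑OrderDual.toDual := by
    intro x y hxy
    have hxy' : x < y := hxy
    rw [Matrix.updateRow_apply]
    split_ifs with hx
    · subst hx
      exact Pi.single_eq_of_ne (by intro e; subst e; exact absurd hij (lt_asymm hxy')) 1
    · exact hA x y hxy'
  rw [Matrix.det_of_lowerTriangular _ htri]
  apply Finset.prod_eq_zero (Finset.mem_univ j)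
  rw [Matrix.updateRow_self]
  exact Pi.single_eq_of_ne (ne_of_lt hij).symm 1

lemma adjugate_upper {L : ℕ} (A : Matrix (Fin L) (Fin L) ℂ)
    (hA : ∀ i j : Fin L, j < i → A i j = 0) {i j : Fin L} (hij : j < i) :
    A.adjugate i j = 0 := by
  rw [Matrix.adjugate_apply]
  have htri : (A.updateRow j (Pi.single i 1)).BlockTriangular id := by
    intro x y hxy
    have hxy' : y < x := hxy
    rw [Matrix.updateRow_apply]
    split_ifs with hx
    · subst hx
      exact Pi.single_eq_of_ne (by intro e; subst e; exact absurd hij (lt_asymm hxy')) 1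
    · exact hA x y hxy'
  rw [Matrix.det_of_upperTriangular htri]
  apply Finset.prod_eq_zero (Finset.mem_univ j)
  rw [Matrix.updateRow_self]
  exact Pi.single_eq_of_ne (ne_of_lt hij) 1

lemma reflect_sum {ι : Type*} [DecidableEq ι] (N : ℕ) (s : Finset ι) (f : ι → Polynomial ℂ) :
    Polynomial.reflect N (∑ j ∈ s, f j) = ∑ j ∈ s, Polynomial.reflect N (f j) := by
  induction s using Finset.induction with
  | empty => simp [Polynomial.reflect_zero]
  | @insert a s hx ih =>
    rw [Finset.sum_insert hx, Finset.sum_insert hx, Polynomial.reflect_add, ih]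

-- helper lemmas about Qtil/Ptil (to be inserted into RinSLaux, after reflect_sum)
namespace RinSLaux2
open Polynomial Matrix Finset RinSLaux

variable {L n : ℕ}

lemma Qtil_nd (hn : 0 < n) {Q : Fin L → Fin L → Polynomial ℂ}
    (hQdeg : ∀ i j, (Q i j).degree ≤ ((n - 1 + if i = j then 1 else 0 : ℕ) : WithBot ℕ)) :
    ∀ i j, (Qtil Q i j).natDegree ≤ n := by
  intro i j
  have h1 : (Q i j).natDegree ≤ n - 1 + if i = j then 1 else 0 :=
    Polynomial.natDegree_le_iff_degree_le.mpr (hQdeg i j)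
  unfold Qtil
  split_ifs with h
  · split_ifs at h1 <;> omega
  · have hij : i ≠ j := fun e => h (le_of_eq (by rw [e]))
    rw [if_neg hij] at h1
    refine le_trans Polynomial.natDegree_mul_le ?_
    rw [Polynomial.natDegree_X]
    omega

lemma Qtil_nd_lt (hn : 0 < n) {Q : Fin L → Fin L → Polynomial ℂ}
    (hQdeg : ∀ i j, (Q i j).degree ≤ ((n - 1 + if i = j then 1 else 0 : ℕ) : WithBot ℕ)) :
    ∀ i j : Fin L, (j : ℕ) < (i : ℕ) → (Qtil Q i j).natDegree < n := by
  intro i j hji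
  have h1 : (Q i j).natDegree ≤ n - 1 + if i = j then 1 else 0 :=
    Polynomial.natDegree_le_iff_degree_le.mpr (hQdeg i j)
  have hij : i ≠ j := fun e => by rw [e] at hji; omega
  rw [if_neg hij] at h1
  unfold Qtil
  rw [if_pos (le_of_lt hji)]
  omega

lemma Qtil_coeff_diag {Q : Fin L → Fin L → Polynomial ℂ}
    (hQm : ∀ i, (Q i i).Monic ∧ (Q i i).natDegree = n) :
    ∀ i, (Qtil Q i i).coeff n = 1 := by
  intro i
  unfold Qtil
  rw [if_pos (le_refl _)]
  have := (hQm i).1.coeff_natDegree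
  rw [(hQm i).2] at this
  exact this

lemma Qtil_coeff_zero {Q : Fin L → Fin L → Polynomial ℂ} :
    ∀ i j : Fin L, (i : ℕ) < (j : ℕ) → (Qtil Q i j).coeff 0 = 0 := by
  intro i j hij
  unfold Qtil
  rw [if_neg (by omega)]
  rw [Polynomial.mul_coeff_zero, Polynomial.coeff_X_zero, zero_mul]

lemma Ptil_nd (hm1 : 1 ≤ n * (L - 1)) {P : Fin L → Fin L → Polynomial ℂ}
    (hPdeg : ∀ j i, (P j i).degree ≤ ((n * (L - 1) - 1 + if i = j then 1 else 0 : ℕ) : WithBot ℕ)) :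
    ∀ k j, (Ptil P k j).natDegree ≤ n * (L - 1) := by
  intro k j
  have h1 : (P k j).natDegree ≤ n * (L - 1) - 1 + if j = k then 1 else 0 :=
    Polynomial.natDegree_le_iff_degree_le.mpr (hPdeg k j)
  unfold Ptil
  split_ifs with h
  · have hjk : j ≠ k := fun e => by rw [e] at h; omega
    rw [if_neg hjk] at h1
    refine le_trans Polynomial.natDegree_mul_le ?_
    rw [Polynomial.natDegree_X]
    omega
  · split_ifs at h1 <;> omega

lemma Ptil_nd_lt (hm1 : 1 ≤ n * (L - 1)) {P : Fin L → Fin L → Polynomial ℂ}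
    (hPdeg : ∀ j i, (P j i).degree ≤ ((n * (L - 1) - 1 + if i = j then 1 else 0 : ℕ) : WithBot ℕ)) :
    ∀ k j : Fin L, (k : ℕ) < (j : ℕ) → (Ptil P k j).natDegree < n * (L - 1) := by
  intro k j hkj
  have h1 : (P k j).natDegree ≤ n * (L - 1) - 1 + if j = k then 1 else 0 :=
    Polynomial.natDegree_le_iff_degree_le.mpr (hPdeg k j)
  have hjk : j ≠ k := fun e => by rw [e] at hkj; omega
  rw [if_neg hjk] at h1
  unfold Ptil
  rw [if_neg (by omega)]
  omega

lemma Ptil_coeff_diag {P : Fin L → Fin L → Polynomial ℂ}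
    (hPm : ∀ i, (P i i).Monic ∧ (P i i).natDegree = n * (L - 1)) :
    ∀ k, (Ptil P k k).coeff (n * (L - 1)) = 1 := by
  intro k
  unfold Ptil
  rw [if_neg (by omega)]
  have := (hPm k).1.coeff_natDegree
  rw [(hPm k).2] at this
  exact this

lemma Ptil_coeff_zero {P : Fin L → Fin L → Polynomial ℂ} :
    ∀ k j : Fin L, (j : ℕ) < (k : ℕ) → (Ptil P k j).coeff 0 = 0 := by
  intro k j hjk
  unfold Ptil
  rw [if_pos hjk]
  rw [Polynomial.mul_coeff_zero, Polynomial.coeff_X_zero, zero_mul]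

end RinSLaux2

end RinSLaux

section Duality

open Polynomial Matrix Finset RinSLaux

set_option maxHeartbeats 4000000 in
lemma duality (L n : ℕ) (hL : 2 ≤ L) [NeZero L] (hn : 0 < n)
    (f : Fin L → PowerSeries ℂ) (hf0 : PowerSeries.constantCoeff (f 0) ≠ 0)
    (Q P : Fin L → Fin L → Polynomial ℂ)
    (hQ : IsHPSol n f Q) (hP : IsSPSol n f P)
    (hQm : ∀ i, (Q i i).Monic ∧ (Q i i).natDegree = n)
    (hPm : ∀ i, (P i i).Monic ∧ (P i i).natDegree = n * (L - 1)) :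
    (Matrix.of fun i j => Qtil Q i j) * (Matrix.of fun i j => Ptil P j i)
      = (Polynomial.X ^ (n * L) : Polynomial ℂ) • 1 := by
  classical
  obtain ⟨hQdeg, hQapp⟩ := hQ
  obtain ⟨hPdeg, hPapp1, hPapp2, hPapp3⟩ := hP
  have hm1 : 1 ≤ n * (L - 1) := by
    have : 0 < n * (L - 1) := Nat.mul_pos hn (by omega)
    omega
  have hnn : n + n * (L - 1) = n * L := by
    have h2 : L - 1 + 1 = L := by omega
    calc n + n * (L - 1) = n * (L - 1 + 1) := by ring
    _ = n * L := by rw [h2]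
  have hQnd := RinSLaux.RinSLaux2.Qtil_nd hn hQdeg
  have hQndlt := RinSLaux.RinSLaux2.Qtil_nd_lt hn hQdeg
  have hQc1 := RinSLaux.RinSLaux2.Qtil_coeff_diag hQm
  have hQ00 := RinSLaux.RinSLaux2.Qtil_coeff_zero (Q := Q)
  have hPnd := RinSLaux.RinSLaux2.Ptil_nd hm1 hPdeg
  have hPndlt := RinSLaux.RinSLaux2.Ptil_nd_lt hm1 hPdeg
  have hPc1 := RinSLaux.RinSLaux2.Ptil_coeff_diag hPm
  have hP00 := RinSLaux.RinSLaux2.Ptil_coeff_zero (P := P)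
  have hQcn0 : ∀ i j : Fin L, (j : ℕ) < (i : ℕ) → (Qtil Q i j).coeff n = 0 :=
    fun i j h => Polynomial.coeff_eq_zero_of_natDegree_lt (hQndlt i j h)
  have hPcn0 : ∀ k j : Fin L, (k : ℕ) < (j : ℕ) → (Ptil P k j).coeff (n * (L - 1)) = 0 :=
    fun k j h => Polynomial.coeff_eq_zero_of_natDegree_lt (hPndlt k j h)
  set φ : Polynomial ℂ →+* PowerSeries ℂ := Polynomial.coeToPowerSeries.ringHom with hφdef
  have hφa : ∀ p : Polynomial ℂ, φ p = (p : PowerSeries ℂ) := fun p => rfl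
  have hXne : (PowerSeries.X : PowerSeries ℂ) ^ (n * L) ≠ 0 :=
    pow_ne_zero _ PowerSeries.X_ne_zero
  -- HP remainders
  have hρex : ∀ i, ∃ r : PowerSeries ℂ,
      (∑ j, f j * φ (Qtil Q i j)) = PowerSeries.X ^ (n * L) * r := by
    intro i
    have := PowerSeries.X_pow_dvd_iff.mpr (hQapp i)
    obtain ⟨r, hr⟩ := this
    refine ⟨r, ?_⟩
    rw [← hr]
    exact Finset.sum_congr rfl (fun j _ => by rw [hφa])
  choose ρ hρ using hρex
  -- SP remainders
  have hEex : ∀ m j : Fin L, ∃ e : PowerSeries ℂ,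
      (f 0 * φ (Ptil P j m) - f m * φ (Ptil P j 0) = PowerSeries.X ^ (n * L) * e)
      ∧ ((m : ℕ) < (j : ℕ) → PowerSeries.constantCoeff e = 0) := by
    intro m j
    by_cases hm : m = 0
    · subst hm
      exact ⟨0, by rw [sub_self, mul_zero], fun _ => map_zero _⟩
    · have hm1' : 1 ≤ (m : ℕ) := by
        rcases Nat.eq_zero_or_pos (m : ℕ) with h | h
        · exact absurd (Fin.ext (by simp [h])) hm
        · omega
      by_cases hj : j = 0
      · subst hj
        have e1 : Ptil P 0 m = P 0 m := by
          unfold Ptil; rw [if_neg (by rw [Fin.val_zero]; omega)]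
        have e2 : Ptil P 0 0 = P 0 0 := by
          unfold Ptil; rw [if_neg (by omega)]
        obtain ⟨e, he⟩ := PowerSeries.X_pow_dvd_iff.mpr (hPapp1 m hm1')
        refine ⟨e, ?_, ?_⟩
        · rw [e1, e2, hφa, hφa]; exact he
        · intro h; rw [Fin.val_zero] at h; omega
      · have hj1 : 1 ≤ (j : ℕ) := by
          rcases Nat.eq_zero_or_pos (j : ℕ) with h | h
          · exact absurd (Fin.ext (by simp [h])) hj
          · omega
        by_cases hmj : (m : ℕ) < (j : ℕ)
        · obtain ⟨e, he⟩ := PowerSeries.X_pow_dvd_iff.mpr (hPapp2 j m hj1 hm1' hmj)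
          refine ⟨PowerSeries.X * e, ?_, fun _ => by simp⟩
          have e1 : Ptil P j m = Polynomial.X * P j m := by
            unfold Ptil; rw [if_pos hmj]
          have e2 : Ptil P j 0 = Polynomial.X * P j 0 := by
            unfold Ptil; rw [if_pos (by rw [Fin.val_zero]; omega)]
          rw [e1, e2, hφa, hφa, Polynomial.coe_mul, Polynomial.coe_mul, Polynomial.coe_X]
          calc f 0 * (PowerSeries.X * ((P j m : Polynomial ℂ) : PowerSeries ℂ))
                - f m * (PowerSeries.X * ((P j 0 : Polynomial ℂ) : PowerSeries ℂ))
              = PowerSeries.X * (f 0 * ((P j m : Polynomial ℂ) : PowerSeries ℂ)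
                - f m * ((P j 0 : Polynomial ℂ) : PowerSeries ℂ)) := by ring
          _ = PowerSeries.X * (PowerSeries.X ^ (n * L) * e) := by rw [he]
          _ = PowerSeries.X ^ (n * L) * (PowerSeries.X * e) := by ring
        · have hjm : (j : ℕ) ≤ (m : ℕ) := by omega
          obtain ⟨e, he⟩ := PowerSeries.X_pow_dvd_iff.mpr (hPapp3 j m hj1 hjm)
          refine ⟨e, ?_, fun h => absurd h hmj⟩
          have e1 : Ptil P j m = P j m := by
            unfold Ptil; rw [if_neg (by omega)]
          have e2 : Ptil P j 0 = Polynomial.X * P j 0 := by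
            unfold Ptil; rw [if_pos (by rw [Fin.val_zero]; omega)]
          rw [e1, e2, hφa, hφa]
          exact he
  choose E hE hE0 using hEex
  set MQ : Matrix (Fin L) (Fin L) (Polynomial ℂ) := Matrix.of (fun i j => Qtil Q i j) with hMQ
  set MP : Matrix (Fin L) (Fin L) (Polynomial ℂ) := Matrix.of (fun i j => Ptil P j i) with hMP
  have hMQa : ∀ i j, MQ i j = Qtil Q i j := fun _ _ => rfl
  have hMPa : ∀ i j, MP i j = Ptil P j i := fun _ _ => rfl
  -- the product has entries c ⬝ X^{nL}
  have hentry : ∀ i k : Fin L, (MQ * MP) i k = ∑ j, Qtil Q i j * Ptil P k j := by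
    intro i k
    rw [Matrix.mul_apply]
    exact Finset.sum_congr rfl (fun j _ => by rw [hMQa, hMPa])
  have hunit : ∀ g : PowerSeries ℂ,
      (PowerSeries.X : PowerSeries ℂ) ^ (n * L) ∣ f 0 * g →
      (PowerSeries.X : PowerSeries ℂ) ^ (n * L) ∣ g := by
    intro g hg
    have hu : IsUnit (f 0) := PowerSeries.isUnit_iff_constantCoeff.mpr (isUnit_iff_ne_zero.mpr hf0)
    obtain ⟨v, hv⟩ := hu.exists_left_inv
    obtain ⟨w, hw⟩ := hg
    refine ⟨v * w, ?_⟩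
    calc g = (v * f 0) * g := by rw [hv, one_mul]
    _ = v * (f 0 * g) := by ring
    _ = v * (PowerSeries.X ^ (n * L) * w) := by rw [hw]
    _ = PowerSeries.X ^ (n * L) * (v * w) := by ring
  have hgdvd : ∀ i k : Fin L, (PowerSeries.X : PowerSeries ℂ) ^ (n * L) ∣ φ ((MQ * MP) i k) := by
    intro i k
    apply hunit
    have key : f 0 * φ ((MQ * MP) i k)
        = PowerSeries.X ^ (n * L) * ((∑ j, φ (Qtil Q i j) * E j k) + φ (Ptil P k 0) * ρ i) := by
      rw [hentry, map_sum, Finset.mul_sum]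
      have h2 : ∀ j : Fin L, f 0 * φ (Qtil Q i j * Ptil P k j)
          = φ (Qtil Q i j) * (PowerSeries.X ^ (n * L) * E j k)
            + (f j * φ (Qtil Q i j)) * φ (Ptil P k 0) := by
        intro j
        rw [_root_.map_mul]
        have h3 : f 0 * φ (Ptil P k j) = PowerSeries.X ^ (n * L) * E j k + f j * φ (Ptil P k 0) := by
          have h4 := hE j k
          linear_combination h4
        calc f 0 * (φ (Qtil Q i j) * φ (Ptil P k j))
            = φ (Qtil Q i j) * (f 0 * φ (Ptil P k j)) := by ring
        _ = φ (Qtil Q i j) * (PowerSeries.X ^ (n * L) * E j k + f j * φ (Ptil P k 0)) := by rw [h3]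
        _ = φ (Qtil Q i j) * (PowerSeries.X ^ (n * L) * E j k)
            + (f j * φ (Qtil Q i j)) * φ (Ptil P k 0) := by ring
      rw [Finset.sum_congr rfl (fun j _ => h2 j), Finset.sum_add_distrib]
      have h5 : ∑ j, φ (Qtil Q i j) * (PowerSeries.X ^ (n * L) * E j k)
          = PowerSeries.X ^ (n * L) * ∑ j, φ (Qtil Q i j) * E j k := by
        rw [Finset.mul_sum]
        exact Finset.sum_congr rfl (fun j _ => by ring)
      have h6 : ∑ j, (f j * φ (Qtil Q i j)) * φ (Ptil P k 0)
          = φ (Ptil P k 0) * ∑ j, f j * φ (Qtil Q i j) := by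
        rw [Finset.mul_sum]
        exact Finset.sum_congr rfl (fun j _ => by ring)
      rw [h5, h6, hρ i]
      ring
    exact ⟨_, key⟩
  have hgc0 : ∀ i k : Fin L, ∀ t, t < n * L → ((MQ * MP) i k).coeff t = 0 := by
    intro i k t ht
    have h := PowerSeries.X_pow_dvd_iff.mp (hgdvd i k) t ht
    rw [hφa] at h
    rw [Polynomial.coeff_coe] at h
    exact h
  have hgnd : ∀ i k : Fin L, ((MQ * MP) i k).natDegree ≤ n * L := by
    intro i k
    rw [hentry]
    apply Polynomial.natDegree_sum_le_of_forall_le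
    intro j _
    refine le_trans Polynomial.natDegree_mul_le ?_
    rw [← hnn]
    exact add_le_add (hQnd i j) (hPnd k j)
  set Cm : Matrix (Fin L) (Fin L) ℂ := Matrix.of (fun i k => ((MQ * MP) i k).coeff (n * L)) with hCmdef
  have hCma : ∀ i k, Cm i k = ((MQ * MP) i k).coeff (n * L) := fun _ _ => rfl
  have hMM : MQ * MP = (Polynomial.X ^ (n * L) : Polynomial ℂ) • (Cm.map Polynomial.C) := by
    refine Matrix.ext (fun i k => ?_)
    rw [Matrix.smul_apply, Matrix.map_apply, hCma, smul_eq_mul]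
    have hcomm : (Polynomial.X ^ (n * L) : Polynomial ℂ) * Polynomial.C (((MQ * MP) i k).coeff (n * L))
        = Polynomial.C (((MQ * MP) i k).coeff (n * L)) * Polynomial.X ^ (n * L) := by ring
    rw [hcomm]
    apply Polynomial.ext
    intro t
    rw [Polynomial.coeff_C_mul, Polynomial.coeff_X_pow]
    rcases lt_trichotomy t (n * L) with ht | ht | ht
    · rw [hgc0 i k t ht, if_neg (by omega), mul_zero]
    · subst ht; rw [if_pos rfl, mul_one]
    · rw [Polynomial.coeff_eq_zero_of_natDegree_lt (lt_of_le_of_lt (hgnd i k) ht),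
        if_neg (by omega), mul_zero]
  -- C is upper triangular unipotent
  have hCsum : ∀ i k : Fin L, Cm i k = ∑ j, (Qtil Q i j).coeff n * (Ptil P k j).coeff (n * (L - 1)) := by
    intro i k
    rw [hCma, hentry, Polynomial.finset_sum_coeff]
    apply Finset.sum_congr rfl
    intro j _
    rw [← hnn]
    exact RinSLaux.coeff_mul_of_natDegree_le (hQnd i j) (hPnd k j)
  have hCup : ∀ i k : Fin L, k < i → Cm i k = 0 := by
    intro i k hki
    rw [hCsum]
    apply Finset.sum_eq_zero
    intro j _
    rcases le_or_gt (j : ℕ) (k : ℕ) with h | h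
    · rw [hQcn0 i j (by rw [Fin.lt_def] at hki; omega), zero_mul]
    · rw [hPcn0 k j h, mul_zero]
  have hCd : ∀ i, Cm i i = 1 := by
    intro i
    rw [hCsum]
    rw [Finset.sum_eq_single i]
    · rw [hQc1, hPc1, one_mul]
    · intro j _ hj
      rcases lt_or_gt_of_ne (fun e : (j : ℕ) = (i : ℕ) => hj (Fin.ext e)) with h | h
      · rw [hQcn0 i j h, zero_mul]
      · rw [hPcn0 i j h, mul_zero]
    · intro h; exact absurd (Finset.mem_univ i) h
  have hdetC : Cm.det = 1 := by
    rw [Matrix.det_of_upperTriangular (M := Cm) (fun i k (h : (k : Fin L) < i) => hCup i k h)]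
    rw [Finset.prod_congr rfl (fun i _ => hCd i), Finset.prod_const_one]
  -- determinants are monomials
  have hdet2 : MQ.det * MP.det = Polynomial.X ^ (n * L * L) := by
    have h1 := congrArg Matrix.det hMM
    rw [Matrix.det_mul, Matrix.det_smul] at h1
    have h2 : (Cm.map Polynomial.C).det = 1 := by
      have h3 := (Polynomial.C : ℂ →+* Polynomial ℂ).map_det Cm
      rw [RingHom.mapMatrix_apply] at h3
      rw [← h3, hdetC, _root_.map_one]
    rw [h2, mul_one, Fintype.card_fin] at h1
    rw [h1, ← pow_mul]
  have hLLe : n * L * L = n * L + n * L * (L - 1) := by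
    have h2 : L = 1 + (L - 1) := by omega
    calc n * L * L = n * L * (1 + (L - 1)) := by rw [← h2]
    _ = n * L + n * L * (L - 1) := by ring
  obtain ⟨c, hc0, hdQ'⟩ := RinSLaux.eq_C_mul_X_pow_of_mul_eq_X_pow (n * L * L) MQ.det MP.det hdet2
  obtain ⟨c', hc'0, hdP'⟩ := RinSLaux.eq_C_mul_X_pow_of_mul_eq_X_pow (n * L * L) MP.det MQ.det
    (by rw [mul_comm]; exact hdet2)
  have hdeg_eq : MQ.det.natDegree = n * L ∧ MP.det.natDegree = n * L * (L - 1) := by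
    have htQ : MQ.det.natDegree ≤ L * n := RinSLaux.natDegree_det_le MQ (fun i j => hQnd i j)
    have htP : MP.det.natDegree ≤ L * (n * (L - 1)) := RinSLaux.natDegree_det_le MP (fun i j => hPnd j i)
    have hsum : MQ.det.natDegree + MP.det.natDegree = n * L * L := by
      have h1 : Polynomial.C (c * c') * Polynomial.X ^ (MQ.det.natDegree + MP.det.natDegree)
          = Polynomial.X ^ (n * L * L) := by
        calc Polynomial.C (c * c') * Polynomial.X ^ (MQ.det.natDegree + MP.det.natDegree)
            = (Polynomial.C c * Polynomial.X ^ MQ.det.natDegree)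
              * (Polynomial.C c' * Polynomial.X ^ MP.det.natDegree) := by
              rw [_root_.map_mul]; ring
        _ = MQ.det * MP.det := by rw [← hdQ', ← hdP']
        _ = Polynomial.X ^ (n * L * L) := hdet2
      have h2 := congrArg Polynomial.natDegree h1
      rw [Polynomial.natDegree_C_mul_X_pow _ _ (mul_ne_zero hc0 hc'0),
        Polynomial.natDegree_X_pow] at h2
      exact h2
    have e1 : L * n = n * L := by ring
    have e2 : L * (n * (L - 1)) = n * L * (L - 1) := by ring
    constructor <;> omega
  have hdQ : MQ.det = Polynomial.C c * Polynomial.X ^ (n * L) := by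
    rw [← hdeg_eq.1]; exact hdQ'
  have hdP : MP.det = Polynomial.C c' * Polynomial.X ^ (n * L * (L - 1)) := by
    rw [← hdeg_eq.2]; exact hdP'
  -- inverse of C
  set D : Matrix (Fin L) (Fin L) ℂ := Cm.adjugate with hDdef
  have hCD : Cm * D = 1 := by rw [hDdef, Matrix.mul_adjugate, hdetC, one_smul]
  have hDC : D * Cm = 1 := by rw [hDdef, Matrix.adjugate_mul, hdetC, one_smul]
  set Dp : Matrix (Fin L) (Fin L) (Polynomial ℂ) := D.map Polynomial.C with hDpdef
  have hCpDp : (Cm.map Polynomial.C) * Dp = 1 := by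
    have h := map_mul ((Polynomial.C : ℂ →+* Polynomial ℂ).mapMatrix (m := Fin L)) Cm D
    rw [hCD, _root_.map_one] at h
    rw [hDpdef]
    simpa [RingHom.mapMatrix_apply] using h.symm
  have hMPD : MQ * (MP * Dp) = (Polynomial.X ^ (n * L) : Polynomial ℂ) • 1 := by
    rw [← Matrix.mul_assoc, hMM, Matrix.smul_mul, hCpDp]
  have hpne : (Polynomial.C c * Polynomial.X ^ (n * L) : Polynomial ℂ) ≠ 0 :=
    mul_ne_zero (by simpa using hc0) (pow_ne_zero _ Polynomial.X_ne_zero)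
  have hγ : MQ.adjugate = (Polynomial.C c) • (MP * Dp) := by
    have h1 : MQ * ((Polynomial.C c) • (MP * Dp) - MQ.adjugate) = 0 := by
      rw [Matrix.mul_sub, Matrix.mul_smul, hMPD, Matrix.mul_adjugate, hdQ, smul_smul]
      rw [sub_self]
    have h2 : MQ.adjugate * (MQ * ((Polynomial.C c) • (MP * Dp) - MQ.adjugate)) = 0 := by
      rw [h1, Matrix.mul_zero]
    rw [← Matrix.mul_assoc, Matrix.adjugate_mul, hdQ, Matrix.smul_mul, Matrix.one_mul] at h2
    have h3 : (Polynomial.C c) • (MP * Dp) - MQ.adjugate = 0 := by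
      refine Matrix.ext (fun i k => ?_)
      have h4 := congrArg (fun M => M i k) h2
      simp only [Matrix.smul_apply, smul_eq_mul, Matrix.smul_apply, Matrix.zero_apply] at h4
      rcases mul_eq_zero.mp h4 with h5 | h5
      · exact absurd h5 hpne
      · exact h5
    have h6 := sub_eq_zero.mp h3
    exact h6.symm
  have hδ : MP * (Dp * MQ) = (Polynomial.X ^ (n * L) : Polynomial ℂ) • 1 := by
    have h1 : MQ.adjugate * MQ = (Polynomial.C c * Polynomial.X ^ (n * L)) • 1 := by
      rw [Matrix.adjugate_mul, hdQ]
    rw [hγ, Matrix.smul_mul] at h1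
    rw [← Matrix.mul_assoc]
    refine Matrix.ext (fun i k => ?_)
    have h2 := congrArg (fun M => M i k) h1
    simp only [Matrix.smul_apply, smul_eq_mul] at h2
    have hCcne : (Polynomial.C c : Polynomial ℂ) ≠ 0 := by simpa using hc0
    apply mul_left_cancel₀ hCcne
    rw [Matrix.smul_apply, smul_eq_mul, h2]
    ring
  -- constant-term matrices
  set ev0 : Polynomial ℂ →+* ℂ := Polynomial.evalRingHom 0 with hev0def
  have hev0a : ∀ p : Polynomial ℂ, ev0 p = p.coeff 0 :=
    fun p => (Polynomial.coeff_zero_eq_eval_zero p).symm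
  set A : Matrix (Fin L) (Fin L) ℂ := MQ.map ev0 with hAdef
  set P0 : Matrix (Fin L) (Fin L) ℂ := MP.map ev0 with hP0def
  have hAa : ∀ i j, A i j = (Qtil Q i j).coeff 0 := by
    intro i j; rw [hAdef, Matrix.map_apply]; rw [hMQa]; exact hev0a _
  have hP0a : ∀ i j, P0 i j = (Ptil P j i).coeff 0 := by
    intro i j; rw [hP0def, Matrix.map_apply]; rw [hMPa]; exact hev0a _
  have hAlow : ∀ i j : Fin L, i < j → A i j = 0 := by
    intro i j hij; rw [hAa]; exact hQ00 i j (Fin.lt_def.mp hij)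
  have hγ0 : A.adjugate = c • (P0 * D) := by
    have h2 : (ev0.mapMatrix) MQ.adjugate = (ev0.mapMatrix) ((Polynomial.C c) • (MP * Dp)) := by
      rw [hγ]
    rw [RingHom.map_adjugate] at h2
    have h3 : (ev0.mapMatrix) MQ = A := by rw [RingHom.mapMatrix_apply, hAdef]
    rw [h3] at h2
    rw [h2]
    refine Matrix.ext (fun i k => ?_)
    rw [RingHom.mapMatrix_apply, Matrix.map_apply, Matrix.smul_apply, Matrix.smul_apply,
      smul_eq_mul, smul_eq_mul, _root_.map_mul]
    have h4 : ev0 (Polynomial.C c) = c := by rw [hev0def]; simp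
    rw [h4]
    congr 1
    rw [Matrix.mul_apply, Matrix.mul_apply, map_sum]
    apply Finset.sum_congr rfl
    intro j _
    rw [_root_.map_mul]
    have e1 : ev0 (MP i j) = P0 i j := by rw [hP0def, Matrix.map_apply]
    have e2 : ev0 (Dp j k) = D j k := by
      rw [hDpdef, Matrix.map_apply, hev0def]; simp
    rw [e1, e2]
  -- power series matrices
  set MQw : Matrix (Fin L) (Fin L) (PowerSeries ℂ) := MQ.map φ with hMQwdef
  set MPw : Matrix (Fin L) (Fin L) (PowerSeries ℂ) := MP.map φ with hMPwdef
  have hMQwa : ∀ i j, MQw i j = φ (Qtil Q i j) := by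
    intro i j; rw [hMQwdef, Matrix.map_apply, hMQa]
  have hMPwa : ∀ i j, MPw i j = φ (Ptil P j i) := by
    intro i j; rw [hMPwdef, Matrix.map_apply, hMPa]
  set cc : PowerSeries ℂ →+* ℂ := PowerSeries.constantCoeff with hccdef
  have hccφ : ∀ p : Polynomial ℂ, cc (φ p) = p.coeff 0 := by
    intro p
    rw [hφa]
    rw [hccdef]
    rw [← PowerSeries.coeff_zero_eq_constantCoeff_apply]
    exact Polynomial.coeff_coe p 0
  have hEw : ∀ m j : Fin L, f 0 * MPw m j - f m * MPw 0 j
      = PowerSeries.X ^ (n * L) * E m j := by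
    intro m j; rw [hMPwa, hMPwa]; exact hE m j
  -- step 7: diagonal entries of A are nonzero off 0
  have hqA : ∀ k : Fin L, k ≠ 0 → A k k ≠ 0 := by
    set U : Matrix (Fin L) (Fin L) (PowerSeries ℂ) :=
      Matrix.of (fun j k => if k = 0 then f j else if j = k then (1 : PowerSeries ℂ) else 0)
      with hUdef
    set W : Matrix (Fin L) (Fin L) (PowerSeries ℂ) :=
      Matrix.of (fun i k => if k = 0 then ρ i else MQw i k) with hWdef
    have hUa : ∀ j k : Fin L, U j k = if k = 0 then f j else if j = k then 1 else 0 :=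
      fun _ _ => rfl
    have hWa : ∀ i k : Fin L, W i k = if k = 0 then ρ i else MQw i k := fun _ _ => rfl
    have hMQU : MQw * U = W * Matrix.diagonal
        (fun k : Fin L => if k = 0 then (PowerSeries.X : PowerSeries ℂ) ^ (n * L) else 1) := by
      refine Matrix.ext (fun i k => ?_)
      rw [Matrix.mul_apply, Matrix.mul_diagonal]
      by_cases hk : k = 0
      · subst hk
        rw [hWa, if_pos rfl, if_pos rfl]
        have e1 : ∀ j, MQw i j * U j 0 = f j * φ (Qtil Q i j) := by
          intro j; rw [hUa, if_pos rfl, hMQwa]; ring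
        rw [Finset.sum_congr rfl (fun j _ => e1 j), hρ i]
        ring
      · rw [hWa, if_neg hk, if_neg hk, mul_one]
        have e1 : ∀ j, MQw i j * U j k = if j = k then MQw i j else 0 := by
          intro j; rw [hUa, if_neg hk]
          by_cases hj : j = k
          · rw [if_pos hj, if_pos hj, mul_one]
          · rw [if_neg hj, if_neg hj, mul_zero]
        rw [Finset.sum_congr rfl (fun j _ => e1 j),
          Finset.sum_ite_eq' Finset.univ k (fun j => MQw i j), if_pos (Finset.mem_univ k)]
    have hdetU : U.det = f 0 := by
      have htri : U.BlockTriangular ⇑OrderDual.toDual := by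
        intro x y hxy
        have h1 : x < y := hxy
        rw [hUa, if_neg (fun e => by subst e; rw [Fin.lt_def, Fin.val_zero] at h1; omega),
          if_neg (ne_of_lt h1)]
      rw [Matrix.det_of_lowerTriangular U htri]
      have e1 : ∀ j : Fin L, U j j = if j = 0 then f 0 else 1 := by
        intro j; rw [hUa]
        by_cases hj : j = 0
        · rw [if_pos hj, if_pos hj, hj]
        · rw [if_neg hj, if_pos rfl, if_neg hj]
      rw [Finset.prod_congr rfl (fun j _ => e1 j),
        Finset.prod_ite_eq' Finset.univ (0 : Fin L) (fun _ => f 0), if_pos (Finset.mem_univ _)]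
    have hdetDg : (Matrix.diagonal
        (fun k : Fin L => if k = 0 then (PowerSeries.X : PowerSeries ℂ) ^ (n * L) else 1)).det
        = PowerSeries.X ^ (n * L) := by
      rw [Matrix.det_diagonal,
        Finset.prod_ite_eq' Finset.univ (0 : Fin L)
          (fun _ => (PowerSeries.X : PowerSeries ℂ) ^ (n * L)), if_pos (Finset.mem_univ _)]
    have hdetMQw : MQw.det = PowerSeries.C c * PowerSeries.X ^ (n * L) := by
      have h1 := φ.map_det MQ
      rw [RingHom.mapMatrix_apply] at h1
      rw [hMQwdef, ← h1, hdQ, _root_.map_mul, map_pow]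
      congr 1
      · rw [hφa]; exact Polynomial.coe_C c
      · congr 1; rw [hφa]; exact Polynomial.coe_X
    have hWdet : W.det = PowerSeries.C c * f 0 := by
      apply mul_right_cancel₀ hXne
      have h1 := congrArg Matrix.det hMQU
      rw [Matrix.det_mul, Matrix.det_mul, hdetU, hdetDg, hdetMQw] at h1
      rw [← h1]; ring
    have h3 : (cc.mapMatrix W).det = c * cc (f 0) := by
      rw [← RingHom.map_det, hWdet, _root_.map_mul, hccdef, PowerSeries.constantCoeff_C]
    have htriW : (cc.mapMatrix W).BlockTriangular ⇑OrderDual.toDual := by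
      intro x y hxy
      have h1 : x < y := hxy
      rw [RingHom.mapMatrix_apply, Matrix.map_apply, hWa,
        if_neg (fun e => by subst e; rw [Fin.lt_def, Fin.val_zero] at h1; omega), hMQwa, hccφ]
      exact hQ00 x y (Fin.lt_def.mp h1)
    have hdetW0 : (cc.mapMatrix W).det = ∏ i, (cc.mapMatrix W) i i :=
      Matrix.det_of_lowerTriangular _ htriW
    have hprodne : (∏ i, (cc.mapMatrix W) i i) ≠ 0 := by
      rw [← hdetW0, h3]
      exact mul_ne_zero hc0 hf0
    intro k hk
    have h5 := Finset.prod_ne_zero_iff.mp hprodne k (Finset.mem_univ k)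
    rw [RingHom.mapMatrix_apply, Matrix.map_apply, hWa, if_neg hk, hMQwa, hccφ] at h5
    rw [hAa]
    exact h5
  -- step 10: P0 0 0 ≠ 0 and diagonal remainders nonzero
  have hp0ε : P0 0 0 ≠ 0 ∧ ∀ m : Fin L, m ≠ 0 → cc (E m m) ≠ 0 := by
    set T : Matrix (Fin L) (Fin L) (PowerSeries ℂ) := Matrix.of (fun m t =>
      if m = 0 then (if t = 0 then (1 : PowerSeries ℂ) else 0)
      else ((if t = m then f 0 else 0) + (if t = 0 then -(f m) else 0))) with hTdef
    set Nw : Matrix (Fin L) (Fin L) (PowerSeries ℂ) :=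
      Matrix.of (fun m j => if m = 0 then MPw 0 j else E m j) with hNwdef
    have hTa : ∀ m t : Fin L, T m t = if m = 0 then (if t = 0 then 1 else 0)
        else ((if t = m then f 0 else 0) + (if t = 0 then -(f m) else 0)) := fun _ _ => rfl
    have hNa : ∀ m j : Fin L, Nw m j = if m = 0 then MPw 0 j else E m j := fun _ _ => rfl
    have hEw : ∀ m j : Fin L, f 0 * MPw m j - f m * MPw 0 j
        = PowerSeries.X ^ (n * L) * E m j := by
      intro m j; rw [hMPwa, hMPwa]; exact hE m j
    have hTMP : T * MPw = Matrix.diagonal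
        (fun m : Fin L => if m = 0 then 1 else PowerSeries.X ^ (n * L)) * Nw := by
      refine Matrix.ext (fun m j => ?_)
      rw [Matrix.mul_apply, Matrix.diagonal_mul]
      by_cases hm : m = 0
      · subst hm
        rw [hNa, if_pos rfl, if_pos rfl, one_mul]
        have e1 : ∀ t, T 0 t * MPw t j = if t = 0 then MPw t j else 0 := by
          intro t; rw [hTa, if_pos rfl]
          by_cases ht : t = 0
          · rw [if_pos ht, if_pos ht, one_mul]
          · rw [if_neg ht, if_neg ht, zero_mul]
        rw [Finset.sum_congr rfl (fun t _ => e1 t),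
          Finset.sum_ite_eq' Finset.univ (0 : Fin L) (fun t => MPw t j),
          if_pos (Finset.mem_univ _)]
      · rw [hNa, if_neg hm, if_neg hm]
        have e1 : ∀ t, T m t * MPw t j
            = (if t = m then f 0 * MPw t j else 0) + (if t = 0 then -(f m * MPw t j) else 0) := by
          intro t; rw [hTa, if_neg hm, add_mul]
          congr 1
          · by_cases ht : t = m
            · rw [if_pos ht, if_pos ht]
            · rw [if_neg ht, if_neg ht, zero_mul]
          · by_cases ht : t = 0
            · rw [if_pos ht, if_pos ht]; ring
            · rw [if_neg ht, if_neg ht, zero_mul]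
        rw [Finset.sum_congr rfl (fun t _ => e1 t), Finset.sum_add_distrib,
          Finset.sum_ite_eq' Finset.univ m (fun t => f 0 * MPw t j), if_pos (Finset.mem_univ _),
          Finset.sum_ite_eq' Finset.univ (0 : Fin L) (fun t => -(f m * MPw t j)),
          if_pos (Finset.mem_univ _), ← hEw m j]
        ring
    have hdetT : T.det = (f 0) ^ (L - 1) := by
      have htri : T.BlockTriangular ⇑OrderDual.toDual := by
        intro x y hxy
        have h1 : x < y := hxy
        rw [hTa]
        by_cases hx : x = 0
        · rw [if_pos hx,
            if_neg (fun e => by subst e; rw [Fin.lt_def, Fin.val_zero] at h1; omega)]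
        · rw [if_neg hx, if_neg (ne_of_gt h1),
            if_neg (fun e => by subst e; rw [Fin.lt_def, Fin.val_zero] at h1; omega), add_zero]
      rw [Matrix.det_of_lowerTriangular T htri]
      have e1 : ∀ m : Fin L, T m m = if m = 0 then 1 else f 0 := by
        intro m; rw [hTa]
        by_cases hm : m = 0
        · simp [hm]
        · simp [hm]
      rw [Finset.prod_congr rfl (fun m _ => e1 m)]
      rw [← Finset.mul_prod_erase Finset.univ _ (Finset.mem_univ (0 : Fin L)), if_pos rfl,
        one_mul]
      have e2 : ∀ m ∈ Finset.univ.erase (0 : Fin L),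
          (if m = 0 then (1 : PowerSeries ℂ) else f 0) = f 0 := by
        intro m hm; rw [if_neg (Finset.ne_of_mem_erase hm)]
      rw [Finset.prod_congr rfl e2, Finset.prod_const,
        Finset.card_erase_of_mem (Finset.mem_univ _), Finset.card_univ, Fintype.card_fin]
    have hdetDg2 : (Matrix.diagonal
        (fun m : Fin L => if m = 0 then (1 : PowerSeries ℂ) else PowerSeries.X ^ (n * L))).det
        = PowerSeries.X ^ (n * L * (L - 1)) := by
      rw [Matrix.det_diagonal]
      rw [← Finset.mul_prod_erase Finset.univ _ (Finset.mem_univ (0 : Fin L)), if_pos rfl,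
        one_mul]
      have e2 : ∀ m ∈ Finset.univ.erase (0 : Fin L),
          (if m = 0 then (1 : PowerSeries ℂ) else PowerSeries.X ^ (n * L))
          = PowerSeries.X ^ (n * L) := by
        intro m hm; rw [if_neg (Finset.ne_of_mem_erase hm)]
      rw [Finset.prod_congr rfl e2, Finset.prod_const,
        Finset.card_erase_of_mem (Finset.mem_univ _), Finset.card_univ, Fintype.card_fin,
        ← pow_mul]
    have hdetMPw : MPw.det = PowerSeries.C c' * PowerSeries.X ^ (n * L * (L - 1)) := by
      have h1 := φ.map_det MP
      rw [RingHom.mapMatrix_apply] at h1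
      rw [hMPwdef, ← h1, hdP, _root_.map_mul, map_pow]
      congr 1
      · rw [hφa]; exact Polynomial.coe_C c'
      · congr 1; rw [hφa]; exact Polynomial.coe_X
    have hNdet : Nw.det = PowerSeries.C c' * (f 0) ^ (L - 1) := by
      apply mul_left_cancel₀ (pow_ne_zero (n * L * (L - 1)) (PowerSeries.X_ne_zero (R := ℂ)))
      have h1 := congrArg Matrix.det hTMP
      rw [Matrix.det_mul, Matrix.det_mul, hdetT, hdetDg2, hdetMPw] at h1
      rw [← h1]
      ring
    have h3 : (cc.mapMatrix Nw).det = c' * (cc (f 0)) ^ (L - 1) := by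
      rw [← RingHom.map_det, hNdet, _root_.map_mul, map_pow, hccdef, PowerSeries.constantCoeff_C]
    have htriN : (cc.mapMatrix Nw).BlockTriangular ⇑OrderDual.toDual := by
      intro x y hxy
      have h1 : x < y := hxy
      rw [RingHom.mapMatrix_apply, Matrix.map_apply, hNa]
      by_cases hx : x = 0
      · rw [if_pos hx, hMPwa, hccφ]
        refine hP00 y 0 ?_
        rw [Fin.val_zero]
        subst hx
        rw [Fin.lt_def, Fin.val_zero] at h1
        omega
      · rw [if_neg hx]
        exact hE0 x y (Fin.lt_def.mp h1)
    have hdetN0 : (cc.mapMatrix Nw).det = ∏ i, (cc.mapMatrix Nw) i i :=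
      Matrix.det_of_lowerTriangular _ htriN
    have hprodne : (∏ i, (cc.mapMatrix Nw) i i) ≠ 0 := by
      rw [← hdetN0, h3]
      exact mul_ne_zero hc'0 (pow_ne_zero _ hf0)
    constructor
    · have h5 := Finset.prod_ne_zero_iff.mp hprodne 0 (Finset.mem_univ _)
      rw [RingHom.mapMatrix_apply, Matrix.map_apply, hNa, if_pos rfl, hMPwa, hccφ] at h5
      rw [hP0a]
      exact h5
    · intro m hm
      have h5 := Finset.prod_ne_zero_iff.mp hprodne m (Finset.mem_univ _)
      rw [RingHom.mapMatrix_apply, Matrix.map_apply, hNa, if_neg hm] at h5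
      exact h5
  obtain ⟨hp0, hε⟩ := hp0ε
  -- step 12: first row of D
  have hD0 : ∀ k : Fin L, k ≠ 0 → D 0 k = 0 := by
    intro k hk
    have hlt : (0 : Fin L) < k := by
      rw [Fin.lt_def, Fin.val_zero]
      rcases Nat.eq_zero_or_pos (k : ℕ) with h | h
      · exact absurd (Fin.ext (by simp [h])) hk
      · exact h
    have hadj : A.adjugate 0 k = 0 := RinSLaux.adjugate_lower A hAlow hlt
    rw [hγ0] at hadj
    rw [Matrix.smul_apply, smul_eq_mul, Matrix.mul_apply] at hadj
    have hsum : ∑ j, P0 0 j * D j k = P0 0 0 * D 0 k := by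
      apply Finset.sum_eq_single
      · intro j _ hj
        have h1 : (0 : ℕ) < (j : ℕ) := by
          rcases Nat.eq_zero_or_pos (j : ℕ) with h | h
          · exact absurd (Fin.ext (by simp [h])) hj
          · exact h
        rw [hP0a, hP00 j 0 (by rw [Fin.val_zero]; exact h1), zero_mul]
      · intro h; exact absurd (Finset.mem_univ _) h
    rw [hsum] at hadj
    rcases mul_eq_zero.mp hadj with h | h
    · exact absurd h hc0
    · rcases mul_eq_zero.mp h with h' | h'
      · exact absurd h' hp0
      · exact h'
  -- step 13: the T-identity
  set Zp : Matrix (Fin L) (Fin L) (Polynomial ℂ) := Dp * MQ with hZpdef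
  have hδ' : MP * Zp = (Polynomial.X ^ (n * L) : Polynomial ℂ) • 1 := hδ
  set G : Matrix (Fin L) (Fin L) ℂ := Zp.map ev0 with hGdef
  have hGDA : G = D * A := by
    rw [hGdef, hZpdef]
    refine Matrix.ext (fun i k => ?_)
    rw [Matrix.map_apply, Matrix.mul_apply, Matrix.mul_apply, map_sum]
    apply Finset.sum_congr rfl
    intro j _
    rw [_root_.map_mul]
    have e2 : ev0 (Dp i j) = D i j := by
      rw [hDpdef, Matrix.map_apply, hev0def]; simp
    have e3 : ev0 (MQ j k) = A j k := by rw [hAdef, Matrix.map_apply]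
    rw [e2, e3]
  have hrow : ∀ m k : Fin L, (∑ j, MPw m j * φ (Zp j k))
      = (if m = k then (PowerSeries.X : PowerSeries ℂ) ^ (n * L) else 0) := by
    intro m k
    have h0 : (MP * Zp) m k
        = ((Polynomial.X ^ (n * L) : Polynomial ℂ)
          • (1 : Matrix (Fin L) (Fin L) (Polynomial ℂ))) m k := by rw [hδ']
    have h0' := congrArg φ h0
    rw [Matrix.mul_apply, map_sum] at h0'
    have e1 : ∀ j, φ (MP m j * Zp j k) = MPw m j * φ (Zp j k) := by
      intro j; rw [_root_.map_mul, hMPa, ← hMPwa]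
    rw [Finset.sum_congr rfl (fun j _ => e1 j)] at h0'
    rw [Matrix.smul_apply, smul_eq_mul, _root_.map_mul, map_pow] at h0'
    have e2 : φ Polynomial.X = (PowerSeries.X : PowerSeries ℂ) := by
      rw [hφa]; exact Polynomial.coe_X
    have e3 : φ ((1 : Matrix (Fin L) (Fin L) (Polynomial ℂ)) m k) = if m = k then 1 else 0 := by
      rw [Matrix.one_apply]
      by_cases h : m = k
      · rw [if_pos h, if_pos h, _root_.map_one]
      · rw [if_neg h, if_neg h, _root_.map_zero]
    rw [e2, e3] at h0'
    rw [h0']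
    by_cases h : m = k
    · rw [if_pos h, if_pos h, mul_one]
    · rw [if_neg h, if_neg h, mul_zero]
  have hTid00 : ∀ m k : Fin L, m ≠ k → k ≠ 0 → (∑ j, E m j * φ (Zp j k)) = 0 := by
    intro m k h1 h2
    apply mul_left_cancel₀ hXne
    rw [mul_zero]
    have lhs1 : (PowerSeries.X : PowerSeries ℂ) ^ (n * L) * ∑ j, E m j * φ (Zp j k)
        = ∑ j, (PowerSeries.X ^ (n * L) * E m j) * φ (Zp j k) := by
      rw [Finset.mul_sum]; exact Finset.sum_congr rfl (fun j _ => by ring)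
    have lhs2 : ∀ j, (PowerSeries.X ^ (n * L) * E m j) * φ (Zp j k)
        = f 0 * (MPw m j * φ (Zp j k)) - f m * (MPw 0 j * φ (Zp j k)) := by
      intro j
      rw [← hEw m j]
      ring
    rw [lhs1, Finset.sum_congr rfl (fun j _ => lhs2 j), Finset.sum_sub_distrib,
      ← Finset.mul_sum, ← Finset.mul_sum, hrow m k, hrow 0 k, if_neg h1,
      if_neg (fun e => h2 e.symm)]
    ring
  have hTid0 : ∀ m k : Fin L, m ≠ k → k ≠ 0 → (∑ j, cc (E m j) * G j k) = 0 := by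
    intro m k h1 h2
    have h3 : ∀ j, cc (E m j) * G j k = cc (E m j * φ (Zp j k)) := by
      intro j
      rw [_root_.map_mul]
      congr 1
      rw [hGdef, Matrix.map_apply, hev0a, hccφ]
    rw [Finset.sum_congr rfl (fun j _ => h3 j), ← map_sum, hTid00 m k h1 h2, _root_.map_zero]
  -- step 14: G is lower triangular
  have hG0row : ∀ k : Fin L, 0 < (k : ℕ) → G 0 k = 0 := by
    intro k hk
    rw [hGDA, Matrix.mul_apply]
    have hsum : ∑ j, D 0 j * A j k = D 0 0 * A 0 k := by
      apply Finset.sum_eq_single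
      · intro j _ hj; rw [hD0 j hj, zero_mul]
      · intro h; exact absurd (Finset.mem_univ _) h
    rw [hsum, hAlow 0 k (by rw [Fin.lt_def, Fin.val_zero]; exact hk), mul_zero]
  have hGlow' : ∀ t : ℕ, ∀ m k : Fin L, (m : ℕ) ≤ t → (m : ℕ) < (k : ℕ) → G m k = 0 := by
    intro t
    induction t with
    | zero =>
      intro m k hm hmk
      have h0 : m = 0 := Fin.ext (by rw [Fin.val_zero]; omega)
      subst h0
      exact hG0row k (by omega)
    | succ t ih =>
      intro m k hm hmk
      by_cases hm0 : (m : ℕ) = 0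
      · have h0 : m = 0 := Fin.ext (by rw [Fin.val_zero]; omega)
        subst h0
        exact hG0row k (by omega)
      · have hmk' : m ≠ k := fun e => by rw [e] at hmk; omega
        have hk0 : k ≠ 0 := fun e => by rw [e, Fin.val_zero] at hmk; omega
        have h := hTid0 m k hmk' hk0
        have hsingle : ∑ j, cc (E m j) * G j k = cc (E m m) * G m k := by
          apply Finset.sum_eq_single
          · intro j _ hj
            rcases lt_or_gt_of_ne (fun e : (j : ℕ) = (m : ℕ) => hj (Fin.ext e)) with hlt | hgt
            · rw [ih j k (by omega) (by omega), mul_zero]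
            · rw [hE0 m j hgt, zero_mul]
          · intro habs; exact absurd (Finset.mem_univ m) habs
        rw [hsingle] at h
        rcases mul_eq_zero.mp h with h' | h'
        · exact absurd h' (hε m (fun e => by rw [e, Fin.val_zero] at hm0; omega))
        · exact h'
  have hGlow : ∀ m k : Fin L, (m : ℕ) < (k : ℕ) → G m k = 0 :=
    fun m k h => hGlow' (m : ℕ) m k le_rfl h
  -- steps 15-16: D = 1
  have hDup : ∀ i k : Fin L, k < i → D i k = 0 :=
    fun i k h => RinSLaux.adjugate_upper Cm hCup h
  have hDd : ∀ k, D k k = 1 := by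
    intro k
    have h := congrArg (fun M => M k k) hDC
    simp only [Matrix.mul_apply, Matrix.one_apply_eq] at h
    have hsingle : ∑ j, D k j * Cm j k = D k k * Cm k k := by
      apply Finset.sum_eq_single
      · intro j _ hj
        rcases lt_or_gt_of_ne hj with h1 | h1
        · rw [hDup k j h1, zero_mul]
        · rw [hCup j k h1, mul_zero]
      · intro habs; exact absurd (Finset.mem_univ k) habs
    rw [hsingle, hCd k, mul_one] at h
    exact h
  have hDstrict : ∀ s : ℕ, ∀ k : Fin L, L - (k : ℕ) ≤ s → ∀ i : Fin L, (i : ℕ) < (k : ℕ) → D i k = 0 := by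
    intro s
    induction s with
    | zero =>
      intro k hk i hik
      exfalso
      have := k.isLt
      omega
    | succ s ih =>
      intro k hk i hik
      have h := hGlow i k hik
      rw [hGDA, Matrix.mul_apply] at h
      have hsingle : ∑ j, D i j * A j k = D i k * A k k := by
        apply Finset.sum_eq_single
        · intro j _ hj
          rcases lt_or_gt_of_ne (fun e : (j : ℕ) = (k : ℕ) => hj (Fin.ext e)) with hlt | hgt
          · rw [hAlow j k (Fin.lt_def.mpr hlt), mul_zero]
          · have hjlt := j.isLt
            rw [ih j (by omega) i (by omega), zero_mul]
        · intro habs; exact absurd (Finset.mem_univ k) habs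
      rw [hsingle] at h
      rcases mul_eq_zero.mp h with h' | h'
      · exact h'
      · exfalso
        have hk0 : k ≠ 0 := fun e => by rw [e, Fin.val_zero] at hik; omega
        exact (hqA k hk0) h'
  have hD1 : D = 1 := by
    ext i k
    rcases lt_trichotomy i k with h | h | h
    · rw [hDstrict (L - (k : ℕ)) k le_rfl i (Fin.lt_def.mp h), Matrix.one_apply_ne (ne_of_lt h)]
    · subst h; rw [hDd, Matrix.one_apply_eq]
    · rw [hDup i k h, Matrix.one_apply_ne (ne_of_gt h)]
  have hC1 : Cm = 1 := by
    have h := hCD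
    rw [hD1, Matrix.mul_one] at h
    exact h
  rw [hMM, hC1]
  congr 1
  exact Matrix.map_one Polynomial.C Polynomial.C_0 Polynomial.C_1


end Duality

/-- The polynomial matrix `R(z) = z^n M_Q(z⁻¹)` has polynomial inverse
`z^{n(L-1)} M_P(z⁻¹)` and determinant 1. -/
theorem R_in_SL (L n : ℕ) (hL : 2 ≤ L) [NeZero L] (hn : 0 < n)
    (f : Fin L → PowerSeries ℂ) (hf0 : PowerSeries.constantCoeff (f 0) ≠ 0)
    (Q P : Fin L → Fin L → Polynomial ℂ)
    (hQ : IsHPSol n f Q) (hP : IsSPSol n f P)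
    (hQm : ∀ i, (Q i i).Monic ∧ (Q i i).natDegree = n)
    (hPm : ∀ i, (P i i).Monic ∧ (P i i).natDegree = n * (L - 1)) :
    let R : Matrix (Fin L) (Fin L) (Polynomial ℂ) :=
      Matrix.of fun i j => Polynomial.reflect n (Qtil Q i j)
    let S : Matrix (Fin L) (Fin L) (Polynomial ℂ) :=
      Matrix.of fun i j => Polynomial.reflect (n * (L - 1)) (Ptil P j i)
    R * S = 1 ∧ S * R = 1 ∧ R.det = 1 := by
  intro R S
  have hdual := duality L n hL hn f hf0 Q P hQ hP hQm hPm
  have hm1 : 1 ≤ n * (L - 1) := by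
    have : 0 < n * (L - 1) := Nat.mul_pos hn (by omega)
    omega
  have hnn : n + n * (L - 1) = n * L := by
    have h2 : L - 1 + 1 = L := by omega
    calc n + n * (L - 1) = n * (L - 1 + 1) := by ring
    _ = n * L := by rw [h2]
  have hQnd := RinSLaux.RinSLaux2.Qtil_nd hn hQ.1
  have hPnd := RinSLaux.RinSLaux2.Ptil_nd hm1 hP.1
  have hQc1 := RinSLaux.RinSLaux2.Qtil_coeff_diag hQm
  have hQcn0 : ∀ i j : Fin L, (j : ℕ) < (i : ℕ) → (Qtil Q i j).coeff n = 0 :=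
    fun i j h => Polynomial.coeff_eq_zero_of_natDegree_lt (RinSLaux.RinSLaux2.Qtil_nd_lt hn hQ.1 i j h)
  have hRa : ∀ i j, R i j = Polynomial.reflect n (Qtil Q i j) := fun _ _ => rfl
  have hSa : ∀ i j, S i j = Polynomial.reflect (n * (L - 1)) (Ptil P j i) := fun _ _ => rfl
  have hRS : R * S = 1 := by
    refine Matrix.ext (fun i k => ?_)
    rw [Matrix.mul_apply]
    have h1 : ∀ j, R i j * S j k = Polynomial.reflect (n * L) (Qtil Q i j * Ptil P k j) := by
      intro j
      rw [hRa, hSa, ← hnn]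
      exact (Polynomial.reflect_mul _ _ (hQnd i j) (hPnd k j)).symm
    rw [Finset.sum_congr rfl (fun j _ => h1 j), ← RinSLaux.reflect_sum]
    have h2 : ∑ j, Qtil Q i j * Ptil P k j
        = Polynomial.X ^ (n * L) * ((1 : Matrix (Fin L) (Fin L) (Polynomial ℂ)) i k) := by
      have h3 : ((Matrix.of fun i j => Qtil Q i j) * (Matrix.of fun i j => Ptil P j i)) i k
          = ((Polynomial.X ^ (n * L) : Polynomial ℂ)
            • (1 : Matrix (Fin L) (Fin L) (Polynomial ℂ))) i k := by rw [hdual]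
      rw [Matrix.mul_apply] at h3
      rw [Matrix.smul_apply, smul_eq_mul] at h3
      exact h3
    rw [h2]
    by_cases hik : i = k
    · subst hik
      rw [Matrix.one_apply_eq, mul_one]
      rw [Polynomial.reflect_monomial]
      rw [Polynomial.revAt_le (le_refl (n * L))]
      simp
    · rw [Matrix.one_apply_ne hik, mul_zero, Polynomial.reflect_zero]
  refine ⟨hRS, mul_eq_one_comm.mp hRS, ?_⟩
  have hdet : R.det * S.det = 1 := by rw [← Matrix.det_mul, hRS, Matrix.det_one]
  obtain ⟨r, hr, hCr⟩ := Polynomial.isUnit_iff.mp (IsUnit.of_mul_eq_one _ hdet)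
  have hev : ((Polynomial.evalRingHom (0 : ℂ)).mapMatrix R).det = r := by
    rw [← RingHom.map_det, ← hCr]
    simp
  have hR0 : ((Polynomial.evalRingHom (0 : ℂ)).mapMatrix R)
      = Matrix.of (fun i j => (Qtil Q i j).coeff n) := by
    refine Matrix.ext (fun i j => ?_)
    rw [RingHom.mapMatrix_apply, Matrix.map_apply, hRa]
    show Polynomial.eval 0 _ = _
    rw [← Polynomial.coeff_zero_eq_eval_zero, Polynomial.coeff_reflect]
    show (Qtil Q i j).coeff (Polynomial.revAt n 0) = _
    rw [Polynomial.revAt_le (Nat.zero_le n), Nat.sub_zero]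
    rfl
  have hdetR0 : (Matrix.of (fun i j => (Qtil Q i j).coeff n)
      : Matrix (Fin L) (Fin L) ℂ).det = 1 := by
    have htri : (Matrix.of (fun i j => (Qtil Q i j).coeff n)
        : Matrix (Fin L) (Fin L) ℂ).BlockTriangular id := by
      intro x y hxy
      exact hQcn0 x y (Fin.lt_def.mp hxy)
    rw [Matrix.det_of_upperTriangular htri]
    simp only [Matrix.of_apply]
    rw [Finset.prod_congr rfl (fun i _ => hQc1 i), Finset.prod_const_one]
  rw [hR0, hdetR0] at hev
  rw [← hCr, ← hev, _root_.map_one]
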